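/- Let N : ℝ → ℝ be differentiable, q : ℝ → ℝ differentiable with q'(s) = N(q(s)) for all s, and let (σ, ρ) be an extremal on an open interval I, i.e. σ'' = (1/2)·N'(q(σ))·(ρ'² − σ'²) and ρ'' = −N'(q(σ))·σ'·ρ' on I. Fix t₀ ∈ I and set C₀ = −N(q(σ(t₀)))·(σ'(t₀)² + ρ'(t₀)²) and C₁ = −N(q(σ(t₀)))·ρ'(t₀). Then for every t ∈ I: (−C₀)·N(q(σ(t))) ≥ C₁². (Hence, when C₁ ≠ 0, an extremal of general type cannot leave the region where N(q) ≥ −1/C₂ with C₂ = C₀/C₁², which forces the oscillating behavior between turning points.) -/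

import Mathlib

lemma my_const_of_hasDerivAt_zero {s : Set ℝ} (hs : IsOpen s) (hc : IsPreconnected s)
    {f : ℝ → ℝ} (hf : ∀ t ∈ s, HasDerivAt f 0 t) {x y : ℝ} (hx : x ∈ s) (hy : y ∈ s) :
    f x = f y := by
  have hconv : Convex ℝ s := hc.convex
  refine hconv.is_const_of_fderivWithin_eq_zero
    (fun z hz => ((hf z hz).differentiableAt).differentiableWithinAt) (fun z hz => ?_) hx hy
  have h0 : HasFDerivAt f (0 : ℝ →L[ℝ] ℝ) z := by
    have := (hf z hz).hasFDerivAt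
    rwa [show (ContinuousLinearMap.toSpanSingleton ℝ (0:ℝ)) = 0 by ext; simp] at this
  rw [(h0.hasFDerivWithinAt).fderivWithin (hs.uniqueDiffWithinAt hz)]

/-- Along an extremal of the metric `ds² = -N(q)(dσ² + dρ²)` with first
integrals `C₀ = -N(q(σ))(σ'² + ρ'²)` and `C₁ = -N(q(σ))ρ'` evaluated at a base
point `t₀`, the inequality `(-C₀)·N(q(σ(t))) ≥ C₁²` holds at every point of the
interval; hence an extremal of general type cannot leave the region where
`N(q) ≥ -1/C₂`, `C₂ = C₀/C₁²`, which forces oscillation between turning points. -/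
theorem extremal_confined_region
    (N q σ ρ : ℝ → ℝ) (I : Set ℝ) (hIopen : IsOpen I) (hIconn : IsPreconnected I)
    (hN : Differentiable ℝ N)
    (hq : Differentiable ℝ q) (hq' : ∀ s, deriv q s = N (q s))
    (hσ : ∀ t ∈ I, DifferentiableAt ℝ σ t)
    (hσ' : ∀ t ∈ I, DifferentiableAt ℝ (deriv σ) t)
    (hρ : ∀ t ∈ I, DifferentiableAt ℝ ρ t)
    (hρ' : ∀ t ∈ I, DifferentiableAt ℝ (deriv ρ) t)
    (hext1 : ∀ t ∈ I, deriv (deriv σ) t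
      = (1 / 2) * deriv N (q (σ t)) * ((deriv ρ t) ^ 2 - (deriv σ t) ^ 2))
    (hext2 : ∀ t ∈ I, deriv (deriv ρ) t
      = -(deriv N (q (σ t)) * deriv σ t * deriv ρ t))
    (t₀ : ℝ) (ht₀ : t₀ ∈ I) (C₀ C₁ : ℝ)
    (hC₀ : C₀ = -(N (q (σ t₀))) * ((deriv σ t₀) ^ 2 + (deriv ρ t₀) ^ 2))
    (hC₁ : C₁ = -(N (q (σ t₀))) * deriv ρ t₀) :
    ∀ t ∈ I, C₁ ^ 2 ≤ (-C₀) * N (q (σ t)) := by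
  have hNq : ∀ t ∈ I, HasDerivAt (fun s => N (q (σ s)))
      (deriv N (q (σ t)) * N (q (σ t)) * deriv σ t) t := by
    intro t ht
    have hσt : HasDerivAt σ (deriv σ t) t := (hσ t ht).hasDerivAt
    have h1 : HasDerivAt q (N (q (σ t))) (σ t) := by
      have := (hq (σ t)).hasDerivAt
      rwa [hq' (σ t)] at this
    have h2 : HasDerivAt N (deriv N (q (σ t))) (q (σ t)) := (hN _).hasDerivAt
    have h3 : HasDerivAt (fun s => N (q s)) (deriv N (q (σ t)) * N (q (σ t))) (σ t) :=
      h2.comp _ h1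
    exact h3.comp _ hσt
  have hG : ∀ t ∈ I, HasDerivAt (fun s => -(N (q (σ s))) * deriv ρ s) 0 t := by
    intro t ht
    have hρ't : HasDerivAt (deriv ρ) (deriv (deriv ρ) t) t := (hρ' t ht).hasDerivAt
    have := ((hNq t ht).neg).mul hρ't
    refine this.congr_deriv ?_
    simp only [Pi.neg_apply, Pi.add_apply, Pi.pow_apply]
    rw [hext2 t ht]; ring
  have hF : ∀ t ∈ I, HasDerivAt
      (fun s => -(N (q (σ s))) * ((deriv σ s) ^ 2 + (deriv ρ s) ^ 2)) 0 t := by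
    intro t ht
    have hσ't : HasDerivAt (deriv σ) (deriv (deriv σ) t) t := (hσ' t ht).hasDerivAt
    have hρ't : HasDerivAt (deriv ρ) (deriv (deriv ρ) t) t := (hρ' t ht).hasDerivAt
    have := ((hNq t ht).neg).mul ((hσ't.pow 2).add (hρ't.pow 2))
    refine this.congr_deriv ?_
    simp only [Pi.neg_apply, Pi.add_apply, Pi.pow_apply, Nat.cast_ofNat]
    rw [hext1 t ht, hext2 t ht]; ring
  intro t ht
  have hGc : -(N (q (σ t₀))) * deriv ρ t₀ = -(N (q (σ t))) * deriv ρ t :=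
    my_const_of_hasDerivAt_zero hIopen hIconn hG ht₀ ht
  have hFc : -(N (q (σ t₀))) * ((deriv σ t₀) ^ 2 + (deriv ρ t₀) ^ 2)
      = -(N (q (σ t))) * ((deriv σ t) ^ 2 + (deriv ρ t) ^ 2) :=
    my_const_of_hasDerivAt_zero hIopen hIconn hF ht₀ ht
  rw [hC₀, hC₁, hGc, hFc]
  nlinarith [sq_nonneg (N (q (σ t)) * deriv σ t), sq_nonneg (N (q (σ t)) * deriv ρ t)]
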